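/- For every natural number a ≠ 1, β(l̃_a − 1) = ⌈(a − 1)/2⌉. -/

import Mathlib

/-- The Lucas sequence: l 0 = 2, l 1 = 1, l (n+2) = l (n+1) + l n. -/
def lucas : ℕ → ℕ
  | 0 => 2
  | 1 => 1
  | n + 2 => lucas (n + 1) + lucas n

/-- The modified (monotone) Lucas sequence: l̃ 0 = 1, l̃ 1 = 2, l̃ n = l n for n ≥ 2. -/
def ltil : ℕ → ℕ
  | 0 => 1
  | 1 => 2
  | n + 2 => lucas (n + 2)

/-- β x : minimal number of summands in a representation of x as a sum of
modified Lucas numbers (with repetitions allowed). -/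
noncomputable def beta (x : ℕ) : ℕ :=
  sInf {s : ℕ | ∃ k : ℕ, ∃ b : ℕ → ℕ,
    x = ∑ i ∈ Finset.range (k + 1), b i * ltil i ∧ s = ∑ i ∈ Finset.range (k + 1), b i}

/-- γ x : the greatest k with l̃ k ≤ x (for x ≥ 1). -/
noncomputable def gamma (x : ℕ) : ℕ := sSup {k : ℕ | ltil k ≤ x}

/-- S a : the additive submonoid of ℕ generated by {l_a} ∪ {l_a + l_n : n ∈ ℕ}. -/
def Sset (a : ℕ) : AddSubmonoid ℕ :=
  AddSubmonoid.closure ({lucas a} ∪ {x : ℕ | ∃ n : ℕ, x = lucas a + lucas n})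

/-- T a : the additive submonoid of ℕ generated by {l_a + l_n : n ∈ ℕ}. -/
def Tset (a : ℕ) : AddSubmonoid ℕ :=
  AddSubmonoid.closure {x : ℕ | ∃ n : ℕ, x = lucas a + lucas n}


lemma lucas_pos : ∀ n, 0 < lucas n
  | 0 => by simp [lucas]
  | 1 => by simp [lucas]
  | n+2 => by rw [lucas]; have := lucas_pos (n+1); omega

lemma ltil_pos (n : ℕ) : 0 < ltil n := by
  match n with
  | 0 => simp [ltil]
  | 1 => simp [ltil]
  | n+2 => rw [ltil]; exact lucas_pos _

lemma ltil_rec (n : ℕ) (h : 2 ≤ n) : ltil (n + 2) = ltil (n + 1) + ltil n := by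
  obtain ⟨m, rfl⟩ : ∃ m, n = m + 2 := ⟨n - 2, by omega⟩
  show ltil (m+2+2) = _
  rw [show m+2+2 = (m+2)+2 from rfl, ltil, ltil, ltil, lucas]

lemma ltil_succ_lt (n : ℕ) : ltil n < ltil (n + 1) := by
  match n with
  | 0 => simp [ltil]
  | 1 => simp [ltil, lucas]
  | 2 => simp [ltil, lucas]
  | m+3 =>
    show ltil (m+3) < ltil (m+2+2)
    rw [ltil_rec (m+2) (by omega)]
    have := ltil_pos (m+2)
    show ltil (m+3) < ltil (m+3) + ltil (m+2)
    omega

lemma ltil_mono : StrictMono ltil := strictMono_nat_of_lt_succ ltil_succ_lt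

lemma ltil0 : ltil 0 = 1 := rfl
lemma ltil1 : ltil 1 = 2 := rfl
lemma ltil2 : ltil 2 = 3 := rfl
lemma ltil3 : ltil 3 = 4 := rfl
lemma ltil4 : ltil 4 = 7 := rfl

/-- sum of modified Lucas numbers indexed by a multiset -/
def lsum (M : Multiset ℕ) : ℕ := (M.map ltil).sum

@[simp] lemma lsum_zero : lsum 0 = 0 := rfl
@[simp] lemma lsum_cons (a : ℕ) (M : Multiset ℕ) : lsum (a ::ₘ M) = ltil a + lsum M := by
  simp [lsum]

lemma le_lsum_of_mem {i : ℕ} {M : Multiset ℕ} (h : i ∈ M) : ltil i ≤ lsum M := by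
  obtain ⟨R, rfl⟩ : ∃ R, M = i ::ₘ R := ⟨M.erase i, (Multiset.cons_erase h).symm⟩
  simp

lemma lsum_erase {i : ℕ} {M : Multiset ℕ} (h : i ∈ M) :
    lsum (M.erase i) = lsum M - ltil i := by
  conv_rhs => rw [← Multiset.cons_erase h]
  simp

lemma raise : ∀ j : ℕ, ∀ M : Multiset ℕ, (∀ i ∈ M, i ≤ j) → ltil (j+1) ≤ lsum M →
    ∃ M' : Multiset ℕ, lsum M' = lsum M ∧ M'.card ≤ M.card ∧
      (∀ i ∈ M', i ≤ j+1) ∧ (j+1) ∈ M' := by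
  intro j
  induction j using Nat.strong_induction_on with
  | _ j IH =>
  intro M hle hsum
  -- Step 1: get M₀ with j ∈ M₀
  obtain ⟨M₀, hs0, hc0, hle0, hmem0⟩ :
      ∃ M₀ : Multiset ℕ, lsum M₀ = lsum M ∧ M₀.card ≤ M.card ∧
        (∀ i ∈ M₀, i ≤ j) ∧ j ∈ M₀ := by
    by_cases hj : j ∈ M
    · exact ⟨M, rfl, le_rfl, hle, hj⟩
    · match j with
      | 0 =>
        exfalso
        have : M = 0 := by
          rcases Multiset.empty_or_exists_mem M with h | ⟨x, hx⟩
          · exact h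
          · exact absurd (Nat.le_zero.mp (hle x hx) ▸ hx) hj
        rw [this] at hsum; simp [ltil1] at hsum
      | (m+1) =>
        have h1 : ∀ i ∈ M, i ≤ m := fun i hi => by
          have := hle i hi; have : i ≠ m+1 := fun h => hj (h ▸ hi); omega
        have h2 : ltil (m+1) ≤ lsum M :=
          le_trans (le_of_lt (ltil_succ_lt (m+1))) hsum
        obtain ⟨M₀, a, b, c, d⟩ := IH m (by omega) M h1 h2
        exact ⟨M₀, a, b, fun i hi => le_trans (c i hi) (by omega), d⟩
  suffices h : ∃ M' : Multiset ℕ, lsum M' = lsum M₀ ∧ M'.card ≤ M₀.card ∧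
      (∀ i ∈ M', i ≤ j+1) ∧ (j+1) ∈ M' by
    obtain ⟨M', e1, e2, e3, e4⟩ := h
    exact ⟨M', by rw [e1, hs0], le_trans e2 hc0, e3, e4⟩
  rw [← hs0] at hsum
  clear hs0 hc0 hle
  set R := M₀.erase j with hRdef
  have hR : M₀ = j ::ₘ R := (Multiset.cons_erase hmem0).symm
  have hRle : ∀ i ∈ R, i ≤ j := fun i hi => hle0 i (Multiset.mem_of_mem_erase hi)
  clear_value R
  subst hR
  by_cases hA : j ∈ R
  · -- two copies of j
    obtain ⟨R', rfl⟩ : ∃ R', R = j ::ₘ R' := ⟨R.erase j, (Multiset.cons_erase hA).symm⟩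
    have hR'le : ∀ i ∈ R', i ≤ j := fun i hi => hRle i (Multiset.mem_cons_of_mem hi)
    match j with
    | 0 => exact ⟨1 ::ₘ R', by simp [ltil0, ltil1]; omega, by simp, by
        intro i hi; rcases Multiset.mem_cons.mp hi with h|h
        · omega
        · exact le_trans (hR'le i h) (by omega), by simp⟩
    | 1 => exact ⟨2 ::ₘ 0 ::ₘ R', by simp [ltil0, ltil1, ltil2]; ring, by simp, by
        intro i hi; rcases Multiset.mem_cons.mp hi with h|h
        · omega
        · rcases Multiset.mem_cons.mp h with h|h
          · omega
          · exact le_trans (hR'le i h) (by omega), by simp⟩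
    | 2 => exact ⟨3 ::ₘ 1 ::ₘ R', by simp [ltil1, ltil2, ltil3]; ring, by simp, by
        intro i hi; rcases Multiset.mem_cons.mp hi with h|h
        · omega
        · rcases Multiset.mem_cons.mp h with h|h
          · omega
          · exact le_trans (hR'le i h) (by omega), by simp⟩
    | 3 => exact ⟨4 ::ₘ 0 ::ₘ R', by simp [ltil0, ltil3, ltil4]; ring, by simp, by
        intro i hi; rcases Multiset.mem_cons.mp hi with h|h
        · omega
        · rcases Multiset.mem_cons.mp h with h|h
          · omega
          · exact le_trans (hR'le i h) (by omega), by simp⟩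
    | m+4 =>
      refine ⟨(m+5) ::ₘ (m+2) ::ₘ R', ?_, by simp, ?_, by simp⟩
      · have e1 : ltil (m+3+2) = ltil (m+3+1) + ltil (m+3) := ltil_rec (m+3) (by omega)
        have e2 : ltil (m+2+2) = ltil (m+2+1) + ltil (m+2) := ltil_rec (m+2) (by omega)
        simp only [lsum_cons]
        have e3 : m+3+2 = m+5 := rfl
        have e4 : m+3+1 = m+4 := rfl
        have e5 : m+2+2 = m+4 := rfl
        have e6 : m+2+1 = m+3 := rfl
        rw [e3, e4] at e1; rw [e5, e6] at e2
        omega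
      · intro i hi; rcases Multiset.mem_cons.mp hi with h|h
        · omega
        · rcases Multiset.mem_cons.mp h with h|h
          · omega
          · exact le_trans (hR'le i h) (by omega)
  · -- only one copy of j
    match j with
    | 0 =>
      exfalso
      have : R = 0 := by
        rcases Multiset.empty_or_exists_mem R with h | ⟨x, hx⟩
        · exact h
        · exact absurd (Nat.le_zero.mp (hRle x hx) ▸ hx) hA
      rw [this] at hsum; simp [lsum, ltil0, ltil1] at hsum
    | 1 =>
      by_cases hB : 0 ∈ R
      · obtain ⟨R', rfl⟩ : ∃ R', R = 0 ::ₘ R' := ⟨R.erase 0, (Multiset.cons_erase hB).symm⟩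
        have hR'le : ∀ i ∈ R', i ≤ 1 := fun i hi => hRle i (Multiset.mem_cons_of_mem hi)
        exact ⟨2 ::ₘ R', by simp [ltil0, ltil1, ltil2]; ring, by simp, by
          intro i hi; rcases Multiset.mem_cons.mp hi with h|h
          · omega
          · exact le_trans (hR'le i h) (by omega), by simp⟩
      · exfalso
        have : R = 0 := by
          rcases Multiset.empty_or_exists_mem R with h | ⟨x, hx⟩
          · exact h
          · have := hRle x hx
            interval_cases x
            · exact absurd hx hB
            · exact absurd hx hA
        rw [this] at hsum; simp [lsum, ltil1, ltil2] at hsum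
    | 2 =>
      by_cases hB : 1 ∈ R
      · obtain ⟨R', rfl⟩ : ∃ R', R = 1 ::ₘ R' := ⟨R.erase 1, (Multiset.cons_erase hB).symm⟩
        have hR'le : ∀ i ∈ R', i ≤ 2 := fun i hi => hRle i (Multiset.mem_cons_of_mem hi)
        exact ⟨3 ::ₘ 0 ::ₘ R', by simp [ltil0, ltil1, ltil2, ltil3]; ring, by simp, by
          intro i hi; rcases Multiset.mem_cons.mp hi with h|h
          · omega
          · rcases Multiset.mem_cons.mp h with h|h
            · omega
            · exact le_trans (hR'le i h) (by omega), by simp⟩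
      · have hB0 : 0 ∈ R := by
          by_contra hB0
          have : R = 0 := by
            rcases Multiset.empty_or_exists_mem R with h | ⟨x, hx⟩
            · exact h
            · have := hRle x hx
              interval_cases x
              · exact absurd hx hB0
              · exact absurd hx hB
              · exact absurd hx hA
          rw [this] at hsum; simp [lsum, ltil2, ltil3] at hsum
        obtain ⟨R', rfl⟩ : ∃ R', R = 0 ::ₘ R' := ⟨R.erase 0, (Multiset.cons_erase hB0).symm⟩
        have hR'le : ∀ i ∈ R', i ≤ 2 := fun i hi => hRle i (Multiset.mem_cons_of_mem hi)
        exact ⟨3 ::ₘ R', by simp [ltil0, ltil2, ltil3]; ring, by simp, by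
          intro i hi; rcases Multiset.mem_cons.mp hi with h|h
          · omega
          · exact le_trans (hR'le i h) (by omega), by simp⟩
    | m+3 =>
      have e1 : ltil (m+4) = ltil (m+3) + ltil (m+2) := by
        have := ltil_rec (m+2) (by omega)
        simpa using this
      by_cases hB : (m+2) ∈ R
      · obtain ⟨R', rfl⟩ : ∃ R', R = (m+2) ::ₘ R' :=
          ⟨R.erase (m+2), (Multiset.cons_erase hB).symm⟩
        have hR'le : ∀ i ∈ R', i ≤ m+3 := fun i hi => hRle i (Multiset.mem_cons_of_mem hi)
        refine ⟨(m+4) ::ₘ R', ?_, by simp, ?_, by simp⟩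
        · simp only [lsum_cons]; omega
        · intro i hi; rcases Multiset.mem_cons.mp hi with h|h
          · omega
          · exact le_trans (hR'le i h) (by omega)
      · -- elements of R are ≤ m+1 ; use IH at m+1
        have hRle' : ∀ i ∈ R, i ≤ m+1 := by
          intro i hi
          have h1 := hRle i hi
          have h2 : i ≠ m+3 := fun h => hA (h ▸ hi)
          have h3 : i ≠ m+2 := fun h => hB (h ▸ hi)
          omega
        have hsR : ltil (m+2) ≤ lsum R := by
          simp only [lsum_cons] at hsum
          have e2 : m+3+1 = m+4 := rfl
          rw [e2] at hsum
          omega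
        obtain ⟨R'', f1, f2, f3, f4⟩ := IH (m+1) (by omega) R hRle' hsR
        obtain ⟨R₃, hR3⟩ : ∃ R₃, R'' = (m+2) ::ₘ R₃ :=
          ⟨R''.erase (m+2), (Multiset.cons_erase f4).symm⟩
        refine ⟨(m+4) ::ₘ R₃, ?_, ?_, ?_, by simp⟩
        · rw [hR3] at f1
          simp only [lsum_cons] at f1 ⊢
          omega
        · rw [hR3] at f2
          simp only [Multiset.card_cons] at f2 ⊢
          omega
        · intro i hi; rcases Multiset.mem_cons.mp hi with h|h
          · omega
          · have : i ≤ m+2 := f3 i (hR3 ▸ Multiset.mem_cons_of_mem h)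
            omega

lemma lower : ∀ a : ℕ, 2 ≤ a → ∀ M : Multiset ℕ, lsum M = ltil a - 1 → a / 2 ≤ M.card := by
  intro a
  induction a using Nat.strong_induction_on with
  | _ a IH =>
  intro ha M hsum
  have hcardpos : ∀ (N : Multiset ℕ), lsum N = ltil a - 1 → 1 ≤ N.card := by
    intro N hN
    rcases Multiset.empty_or_exists_mem N with h | ⟨x, hx⟩
    · exfalso
      rw [h, lsum_zero] at hN
      have h2 : ltil 2 ≤ ltil a := ltil_mono.le_iff_le.mpr ha
      rw [ltil2] at h2
      omega
    · have hne : N ≠ 0 := fun h0 => by rw [h0] at hx; exact Multiset.notMem_zero x hx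
      have := Multiset.card_pos.mpr hne
      omega
  match a, ha with
  | 2, _ => simpa using hcardpos M hsum
  | 3, _ => simpa using hcardpos M hsum
  | (m+4), _ =>
    have e1 : ltil (m+4) = ltil (m+3) + ltil (m+2) := by
      have := ltil_rec (m+2) (by omega); simpa using this
    have hlt : ∀ i ∈ M, i ≤ m+3 := by
      intro i hi
      have h1 := le_lsum_of_mem hi
      rw [hsum] at h1
      by_contra h
      have : ltil (m+4) ≤ ltil i := ltil_mono.le_iff_le.mpr (by omega)
      have := ltil_pos (m+4)
      omega
    -- get M' containing m+3
    obtain ⟨M', g1, g2, g3⟩ :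
        ∃ M' : Multiset ℕ, lsum M' = lsum M ∧ M'.card ≤ M.card ∧ (m+3) ∈ M' := by
      by_cases hj : (m+3) ∈ M
      · exact ⟨M, rfl, le_rfl, hj⟩
      · have h1 : ∀ i ∈ M, i ≤ m+2 := by
          intro i hi
          have := hlt i hi
          have : i ≠ m+3 := fun h => hj (h ▸ hi)
          omega
        have h2 : ltil (m+2+1) ≤ lsum M := by
          rw [hsum]
          have h3 := ltil_mono (show m+3 < m+4 by omega)
          have : ltil (m+2+1) = ltil (m+3) := rfl
          omega
        obtain ⟨M', a1, a2, _, a4⟩ := raise (m+2) M h1 h2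
        exact ⟨M', a1, a2, a4⟩
    obtain ⟨R, rfl⟩ : ∃ R, M' = (m+3) ::ₘ R := ⟨M'.erase _, (Multiset.cons_erase g3).symm⟩
    rw [lsum_cons, hsum] at g1
    have hR : lsum R = ltil (m+2) - 1 := by
      have := ltil_pos (m+2)
      omega
    have := IH (m+2) (by omega) (by omega) R hR
    rw [Multiset.card_cons] at g2
    omega

lemma exists_multiset (k : ℕ) (b : ℕ → ℕ) :
    ∃ M : Multiset ℕ, lsum M = ∑ i ∈ Finset.range (k+1), b i * ltil i ∧
      M.card = ∑ i ∈ Finset.range (k+1), b i := by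
  refine ⟨(Finset.range (k+1)).val.bind fun i => Multiset.replicate (b i) i, ?_, ?_⟩
  · simp [lsum, Multiset.map_bind, Multiset.sum_bind, Finset.sum,
      Multiset.map_replicate, mul_comm]
  · simp [Multiset.card_bind, Finset.sum]

lemma sum_odd : ∀ m : ℕ,
    (∑ i ∈ Finset.range (2*m+2), (if i % 2 = 1 then 1 else 0) * ltil i) + 1 = ltil (2*m+2)
  | 0 => by simp [Finset.sum_range_succ, ltil1, ltil2]
  | (m+1) => by
    have e0 : 2*(m+1)+2 = (2*m+2+1)+1 := by ring
    rw [e0, Finset.sum_range_succ, Finset.sum_range_succ]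
    rw [if_neg (by omega : ¬ (2*m+2) % 2 = 1), if_pos (by omega : (2*m+2+1) % 2 = 1)]
    simp only [one_mul, zero_mul]
    have h0 := sum_odd m
    have h1 := ltil_rec (2*m+2) (by omega)
    have i1 : ltil (2*m+2+2) = ltil (2*m+2+1+1) := congrArg ltil (by omega)
    have i2 : ltil (2*m+3) = ltil (2*m+2+1) := congrArg ltil (by omega)
    have i3 : ltil (2*m+4) = ltil (2*m+2+2) := congrArg ltil (by omega)
    omega

lemma cnt_odd : ∀ m : ℕ,
    (∑ i ∈ Finset.range (2*m+2), (if i % 2 = 1 then (1:ℕ) else 0)) = m+1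
  | 0 => by decide
  | (m+1) => by
    have e0 : 2*(m+1)+2 = (2*m+2+1)+1 := by ring
    rw [e0, Finset.sum_range_succ, Finset.sum_range_succ]
    rw [if_neg (by omega : ¬ (2*m+2) % 2 = 1), if_pos (by omega : (2*m+2+1) % 2 = 1)]
    have := cnt_odd m
    omega

lemma sum_even : ∀ m : ℕ,
    (∑ i ∈ Finset.range (2*m+3), (if 2 ≤ i ∧ i % 2 = 0 then 1 else 0) * ltil i) + 1
      = ltil (2*m+3)
  | 0 => by
    rw [show 2*0+3 = 3 from rfl]
    rw [Finset.sum_range_succ, Finset.sum_range_succ, Finset.sum_range_succ]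
    norm_num [ltil2, ltil3]
  | (m+1) => by
    have e0 : 2*(m+1)+3 = (2*m+3+1)+1 := by ring
    rw [e0, Finset.sum_range_succ, Finset.sum_range_succ]
    rw [if_neg (by omega : ¬(2 ≤ 2*m+3 ∧ (2*m+3) % 2 = 0)),
        if_pos (show 2 ≤ 2*m+3+1 ∧ (2*m+3+1) % 2 = 0 by omega)]
    simp only [one_mul, zero_mul]
    have h0 := sum_even m
    have h1 := ltil_rec (2*m+3) (by omega)
    have i1 : ltil (2*m+3+2) = ltil (2*m+3+1+1) := congrArg ltil (by omega)
    have i2 : ltil (2*m+4) = ltil (2*m+3+1) := congrArg ltil (by omega)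
    have i3 : ltil (2*m+5) = ltil (2*m+3+2) := congrArg ltil (by omega)
    omega

lemma cnt_even : ∀ m : ℕ,
    (∑ i ∈ Finset.range (2*m+3), (if 2 ≤ i ∧ i % 2 = 0 then (1:ℕ) else 0)) = m+1
  | 0 => by
    rw [show 2*0+3 = 3 from rfl]
    rw [Finset.sum_range_succ, Finset.sum_range_succ, Finset.sum_range_succ]
    norm_num
  | (m+1) => by
    have e0 : 2*(m+1)+3 = ((2*m+3)+1)+1 := by ring
    rw [e0, Finset.sum_range_succ, Finset.sum_range_succ]
    have h2 : ¬(2 ≤ 2*m+3 ∧ (2*m+3) % 2 = 0) := by omega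
    have h3 : (2 ≤ 2*m+3+1 ∧ (2*m+3+1) % 2 = 0) := by omega
    rw [if_neg h2, if_pos h3]
    have := cnt_even m
    omega

theorem beta_ltil_sub_one (a : ℕ) (ha : a ≠ 1) :
    beta (ltil a - 1) = (a - 1 + 1) / 2 := by
  match a, ha with
  | 0, _ =>
    show beta (ltil 0 - 1) = 0
    rw [show ltil 0 - 1 = 0 from rfl]
    apply Nat.sInf_eq_zero.mpr
    left
    exact ⟨0, fun _ => 0, by simp, by simp⟩
  | (n+2), _ =>
    have hE : (n+2) - 1 + 1 = n + 2 := by omega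
    rw [hE]
    -- membership witness
    have hmem : (n+2)/2 ∈ {s : ℕ | ∃ k : ℕ, ∃ b : ℕ → ℕ,
        ltil (n+2) - 1 = ∑ i ∈ Finset.range (k + 1), b i * ltil i ∧
        s = ∑ i ∈ Finset.range (k + 1), b i} := by
      rcases Nat.even_or_odd n with ⟨m, hm⟩ | ⟨m, hm⟩
      · -- n = 2m, a = 2m+2
        subst hm
        refine ⟨2*m+1, fun i => if i % 2 = 1 then 1 else 0, ?_, ?_⟩
        · have h0 := sum_odd m
          have e : 2*m+1+1 = 2*m+2 := by omega
          rw [show m+m+2 = 2*m+2 by ring, e]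
          show ltil (2*m+2) - 1 =
            ∑ i ∈ Finset.range (2*m+2), (if i % 2 = 1 then 1 else 0) * ltil i
          omega
        · have := cnt_odd m
          have e : 2*m+1+1 = 2*m+2 := by omega
          rw [e, this]
          omega
      · -- n = 2m+1, a = 2m+3
        subst hm
        refine ⟨2*m+2, fun i => if 2 ≤ i ∧ i % 2 = 0 then 1 else 0, ?_, ?_⟩
        · have h0 := sum_even m
          have e : 2*m+2+1 = 2*m+3 := by omega
          rw [show 2*m+1+2 = 2*m+3 by ring, e]
          show ltil (2*m+3) - 1 =
            ∑ i ∈ Finset.range (2*m+3), (if 2 ≤ i ∧ i % 2 = 0 then 1 else 0) * ltil i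
          omega
        · have := cnt_even m
          have e : 2*m+2+1 = 2*m+3 := by omega
          rw [e, this]
          omega
    apply le_antisymm
    · exact Nat.sInf_le hmem
    · apply le_csInf ⟨_, hmem⟩
      rintro s ⟨k, b, hx, hs⟩
      obtain ⟨M, hM1, hM2⟩ := exists_multiset k b
      rw [← hx] at hM1
      have := lower (n+2) (by omega) M hM1
      omega
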